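/- arXiv:2408.03870 — 4 statements merged into one kernel-verified Lean document; each statement's English description precedes it below -/
import Mathlib

section
/- For every speed c with 0 ≤ c < √2, the function u(x) = √((2−c²)/2)·tanh(√(2−c²)·x/2) − i·c/√2 satisfies the equation i·c·u′ + u′′ + u·(1 − |u|²) = 0 on ℝ. -/
lemma my_hasDerivAt_tanh (x : ℝ) : HasDerivAt Real.tanh (1 - Real.tanh x ^ 2) x := by
  have h : HasDerivAt (fun x => Real.sinh x / Real.cosh x)
      ((Real.cosh x * Real.cosh x - Real.sinh x * Real.sinh x) / Real.cosh x ^ 2) x :=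
    (Real.hasDerivAt_sinh x).div (Real.hasDerivAt_cosh x) (Real.cosh_pos x).ne'
  have e : (Real.cosh x * Real.cosh x - Real.sinh x * Real.sinh x) / Real.cosh x ^ 2
      = 1 - Real.tanh x ^ 2 := by
    rw [Real.tanh_eq_sinh_div_cosh]
    have hc := (Real.cosh_pos x).ne'
    have h1 : Real.cosh x ^ 2 - Real.sinh x ^ 2 = 1 := Real.cosh_sq_sub_sinh_sq x
    field_simp
  have hfun : (fun x => Real.sinh x / Real.cosh x) = Real.tanh := by
    funext y; rw [Real.tanh_eq_sinh_div_cosh]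
  rw [hfun, e] at h
  exact h

/-- The explicit dark soliton `u(x) = √((2−c²)/2)·tanh(√(2−c²)·x/2) − i·c/√2`
solves the local Gross–Pitaevskii traveling-wave equation
`i·c·u′ + u′′ + u·(1 − |u|²) = 0` on `ℝ`, for every `0 ≤ c < √2`. -/
theorem soliton_solves_local_GP (c : ℝ) (hc0 : 0 ≤ c) (hc : c < Real.sqrt 2)
    (u : ℝ → ℂ)
    (hu : ∀ x : ℝ,
      u x = (↑(Real.sqrt ((2 - c ^ 2) / 2) * Real.tanh (Real.sqrt (2 - c ^ 2) * x / 2)) : ℂ)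
        - Complex.I * (↑(c / Real.sqrt 2) : ℂ)) :
    ∀ x : ℝ,
      Complex.I * (c : ℂ) * deriv u x + deriv (deriv u) x
        + u x * (1 - ((‖u x‖) ^ 2 : ℝ)) = 0 := by
  have hU : u = fun x =>
      (↑(Real.sqrt ((2 - c ^ 2) / 2) * Real.tanh (Real.sqrt (2 - c ^ 2) * x / 2)) : ℂ)
        - Complex.I * (↑(c / Real.sqrt 2) : ℂ) := funext hu
  subst hU
  set a := Real.sqrt (2 - c ^ 2) with ha
  set b := Real.sqrt ((2 - c ^ 2) / 2) with hb
  have hc2 : c ^ 2 < 2 := by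
    have := Real.sq_sqrt (by norm_num : (2:ℝ) ≥ 0)
    nlinarith [hc, hc0, Real.sqrt_nonneg 2]
  have ha2 : a ^ 2 = 2 - c ^ 2 := Real.sq_sqrt (by linarith)
  have hb2 : b ^ 2 = (2 - c ^ 2) / 2 := Real.sq_sqrt (by linarith)
  have hs2 : Real.sqrt 2 * Real.sqrt 2 = 2 := Real.mul_self_sqrt (by norm_num)
  have hs2ne : Real.sqrt 2 ≠ 0 := by positivity
  have hab : a = Real.sqrt 2 * b := by
    rw [ha, hb, ← Real.sqrt_mul (by norm_num : (0:ℝ) ≤ 2)]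
    congr 1
    ring
  -- derivatives of inner real functions
  have hinner : ∀ x : ℝ, HasDerivAt (fun x : ℝ => a * x / 2) (a / 2) x := by
    intro x
    simpa using ((hasDerivAt_id x).const_mul a).div_const 2
  have htanh : ∀ x : ℝ, HasDerivAt (fun x : ℝ => Real.tanh (a * x / 2))
      ((1 - Real.tanh (a * x / 2) ^ 2) * (a / 2)) x := fun x =>
    by have h := (my_hasDerivAt_tanh (a * x / 2)).comp x (hinner x); exact h
  have hf : ∀ x : ℝ, HasDerivAt (fun x : ℝ => b * Real.tanh (a * x / 2))
      (b * ((1 - Real.tanh (a * x / 2) ^ 2) * (a / 2))) x := fun x =>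
    (htanh x).const_mul b
  have hu1 : ∀ x : ℝ, HasDerivAt
      (fun x : ℝ => (↑(b * Real.tanh (a * x / 2)) : ℂ) - Complex.I * (↑(c / Real.sqrt 2) : ℂ))
      (Complex.ofReal (b * ((1 - Real.tanh (a * x / 2) ^ 2) * (a / 2)))) x := fun x =>
    ((hf x).ofReal_comp).sub_const _
  have hderiv1 : deriv (fun x : ℝ =>
      (↑(b * Real.tanh (a * x / 2)) : ℂ) - Complex.I * (↑(c / Real.sqrt 2) : ℂ))
      = fun x => (Complex.ofReal (b * ((1 - Real.tanh (a * x / 2) ^ 2) * (a / 2)))) :=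
    funext fun x => (hu1 x).deriv
  -- second derivative
  have hg : ∀ x : ℝ, HasDerivAt
      (fun x : ℝ => b * ((1 - Real.tanh (a * x / 2) ^ 2) * (a / 2)))
      (b * ((-(2 * Real.tanh (a * x / 2) * ((1 - Real.tanh (a * x / 2) ^ 2) * (a / 2)))) * (a / 2))) x := by
    intro x
    have hp : HasDerivAt (fun x : ℝ => Real.tanh (a * x / 2) ^ 2)
        (2 * Real.tanh (a * x / 2) * ((1 - Real.tanh (a * x / 2) ^ 2) * (a / 2))) x := by
      simpa [pow_one, mul_comm, mul_assoc, mul_left_comm] using (htanh x).fun_pow 2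
    have := ((hp.const_sub 1).mul_const (a / 2)).const_mul b
    convert this using 1
  have hg' : ∀ x : ℝ, HasDerivAt
      (fun x : ℝ => (Complex.ofReal (b * ((1 - Real.tanh (a * x / 2) ^ 2) * (a / 2)))))
      (Complex.ofReal (b * ((-(2 * Real.tanh (a * x / 2) * ((1 - Real.tanh (a * x / 2) ^ 2) * (a / 2)))) * (a / 2)))) x :=
    fun x => (hg x).ofReal_comp
  intro x
  rw [hderiv1, (hg' x).deriv]
  have habs : (‖(↑(b * Real.tanh (a * x / 2)) : ℂ)
      - Complex.I * (↑(c / Real.sqrt 2) : ℂ)‖) ^ 2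
      = (b * Real.tanh (a * x / 2)) ^ 2 + (c / Real.sqrt 2) ^ 2 := by
    rw [← Complex.normSq_eq_norm_sq, Complex.normSq_apply]
    simp only [Complex.sub_re, Complex.sub_im, Complex.mul_re, Complex.mul_im,
      Complex.I_re, Complex.I_im, Complex.ofReal_re, Complex.ofReal_im]
    ring
  beta_reduce
  set t := Real.tanh (a * x / 2) with ht
  rw [habs]
  have hk2 : (c / Real.sqrt 2) ^ 2 = c ^ 2 / 2 := by
    rw [div_pow]; rw [show Real.sqrt 2 ^ 2 = 2 by nlinarith [hs2]]
  have hck : c * a = 2 * ((c / Real.sqrt 2) * b) := by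
    rw [hab]; field_simp; linear_combination (c * b) * hs2
  -- split into real and imaginary parts
  apply Complex.ext
  · simp only [Complex.add_re, Complex.add_im, Complex.mul_re, Complex.mul_im,
      Complex.sub_re, Complex.sub_im, Complex.ofReal_re, Complex.ofReal_im,
      Complex.I_re, Complex.I_im, Complex.one_re, Complex.one_im, Complex.zero_re]
    ring_nf
    linear_combination (-(b * t * (1 - t ^ 2)) / 2) * ha2 + (-(b * t ^ 3)) * hb2
      + (-(b * t)) * hk2
  · simp only [Complex.add_re, Complex.add_im, Complex.mul_re, Complex.mul_im,
      Complex.sub_re, Complex.sub_im, Complex.ofReal_re, Complex.ofReal_im,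
      Complex.I_re, Complex.I_im, Complex.one_re, Complex.one_im, Complex.zero_im]
    ring_nf
    linear_combination (b * (1 - t ^ 2) / 2) * hck + (c / Real.sqrt 2) * hb2
      + (c / Real.sqrt 2) * hk2
end

section
/- Let c ≥ 0 and let u : ℝ → ℂ be a twice continuously differentiable solution of i·c·u′ + u′′ + u·(W ∗ (1 − |u|²)) = 0 on ℝ, where W ∗ f denotes convolution with a finite signed measure W. Then the function v = |u|² satisfies the differential inequality −v′′ ≤ (2·(W ∗ (1 − v)) + c²/2)·v on ℝ. -/
open MeasureTheory

/-- Integration of a real function against a finite signed Borel measure `W`,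
defined via the Jordan decomposition `W = W⁺ − W⁻`. -/
noncomputable def signedIntegral (W : MeasureTheory.SignedMeasure ℝ) (f : ℝ → ℝ) : ℝ :=
  (∫ y, f y ∂W.toJordanDecomposition.posPart) - ∫ y, f y ∂W.toJordanDecomposition.negPart

/-- Convolution `(W ∗ f)(x) = ∫ f(x − y) dW(y)` of a finite signed measure with a function. -/
noncomputable def signedConv (W : MeasureTheory.SignedMeasure ℝ) (f : ℝ → ℝ) (x : ℝ) : ℝ :=
  signedIntegral W (fun y => f (x - y))

/-- If `u` is a `C²` solution of `i·c·u′ + u′′ + u·(W ∗ (1 − |u|²)) = 0` on `ℝ`,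
with `c ≥ 0` and `W` a finite signed measure, then `v = |u|²` satisfies the
differential inequality `−v′′ ≤ (2·(W ∗ (1 − v)) + c²/2)·v` on `ℝ`. -/
theorem modulus_squared_diff_ineq (c : ℝ) (hc : 0 ≤ c)
    (W : MeasureTheory.SignedMeasure ℝ) (u : ℝ → ℂ) (hu : ContDiff ℝ 2 u)
    (heq : ∀ x : ℝ,
      Complex.I * (c : ℂ) * deriv u x + deriv (deriv u) x
        + u x * ((signedConv W (fun y => 1 - ‖u y‖ ^ 2) x : ℝ) : ℂ) = 0)
    (v : ℝ → ℝ) (hv : ∀ x : ℝ, v x = ‖u x‖ ^ 2) :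
    ∀ x : ℝ,
      -(deriv (deriv v) x) ≤ (2 * signedConv W (fun y => 1 - v y) x + c ^ 2 / 2) * v x := by
  intro x
  -- basic differentiability
  have h2 : ContDiff ℝ (1 + 1) u := by norm_num; exact hu
  have hdu : Differentiable ℝ u := hu.differentiable (by norm_num)
  have hdu' : ContDiff ℝ 1 (deriv u) := (contDiff_succ_iff_deriv.mp h2).2.2
  have hddu : Differentiable ℝ (deriv u) := hdu'.differentiable one_ne_zero
  have hd1 : ∀ x, HasDerivAt u (deriv u x) x := fun x => (hdu x).hasDerivAt
  have hd2 : ∀ x, HasDerivAt (deriv u) (deriv (deriv u) x) x := fun x => (hddu x).hasDerivAt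
  -- real and imaginary parts
  have hre : ∀ (f : ℝ → ℂ) (f' : ℂ) (x : ℝ), HasDerivAt f f' x →
      HasDerivAt (fun t => (f t).re) f'.re x := fun f f' x h =>
    (Complex.reCLM.hasFDerivAt.comp_hasDerivAt x h)
  have him : ∀ (f : ℝ → ℂ) (f' : ℂ) (x : ℝ), HasDerivAt f f' x →
      HasDerivAt (fun t => (f t).im) f'.im x := fun f f' x h =>
    (Complex.imCLM.hasFDerivAt.comp_hasDerivAt x h)
  -- v equals re² + im²
  have hveq : v = fun t => (u t).re ^ 2 + (u t).im ^ 2 := by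
    funext t
    rw [hv t, Complex.sq_norm, Complex.normSq_apply]
    ring
  -- first derivative of v
  have hv1 : ∀ t, HasDerivAt v
      (2 * (u t).re * (deriv u t).re + 2 * (u t).im * (deriv u t).im) t := by
    intro t
    rw [hveq]
    have ha := (hre u (deriv u t) t (hd1 t)).pow 2
    have hb := (him u (deriv u t) t (hd1 t)).pow 2
    exact (ha.add hb).congr_deriv (by norm_num <;> ring)
  have hdv : deriv v = fun t =>
      2 * (u t).re * (deriv u t).re + 2 * (u t).im * (deriv u t).im :=
    funext fun t => (hv1 t).deriv
  -- second derivative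
  have hv2 : HasDerivAt (deriv v)
      (2 * (deriv u x).re ^ 2 + 2 * (u x).re * (deriv (deriv u) x).re
        + (2 * (deriv u x).im ^ 2 + 2 * (u x).im * (deriv (deriv u) x).im)) x := by
    rw [hdv]
    have ha := ((hre u (deriv u x) x (hd1 x)).const_mul 2).mul
      (hre (deriv u) (deriv (deriv u) x) x (hd2 x))
    have hb := ((him u (deriv u x) x (hd1 x)).const_mul 2).mul
      (him (deriv u) (deriv (deriv u) x) x (hd2 x))
    exact (ha.add hb).congr_deriv (by ring)
  have hddv : deriv (deriv v) x =
      2 * (deriv u x).re ^ 2 + 2 * (u x).re * (deriv (deriv u) x).re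
        + (2 * (deriv u x).im ^ 2 + 2 * (u x).im * (deriv (deriv u) x).im) := hv2.deriv
  -- convolution terms agree
  have hF : signedConv W (fun y => 1 - v y) x
      = signedConv W (fun y => 1 - ‖u y‖ ^ 2) x := by
    congr 1; funext y; rw [hv y]
  set F := signedConv W (fun y => 1 - ‖u y‖ ^ 2) x with hFdef
  -- extract real equations from heq
  have he := heq x
  rw [Complex.ext_iff] at he
  simp only [Complex.add_re, Complex.add_im, Complex.mul_re, Complex.mul_im,
    Complex.I_re, Complex.I_im, Complex.ofReal_re, Complex.ofReal_im,
    Complex.zero_re, Complex.zero_im] at he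
  obtain ⟨he1, he2⟩ := he
  rw [← hFdef] at he1 he2
  have hP : (deriv (deriv u) x).re = c * (deriv u x).im - (u x).re * F := by
    linear_combination he1
  have hQ : (deriv (deriv u) x).im = -(c * (deriv u x).re) - (u x).im * F := by
    linear_combination he2
  rw [hddv, hF, hv x, Complex.sq_norm, Complex.normSq_apply, hP, hQ]
  nlinarith [sq_nonneg (2 * (deriv u x).re - c * (u x).im),
    sq_nonneg (2 * (deriv u x).im + c * (u x).re), sq_nonneg c]
end

section
/- Let W = A·(δ₀ + μ), where μ ∈ L¹(ℝ) is even with μ ≤ 0, ‖μ‖_{L¹} < 1, and A = 1/(1 − ‖μ‖_{L¹}) > 0, so that Ŵ(0) = 1. Let u : ℝ → ℝ be a C² bounded solution of u′′ + u·(W ∗ (1 − u²)) = 0 satisfying |u| ≤ 1 on ℝ and u(x) → ±1 as x → ±∞. Then −1 < u(x) < 1 for all x ∈ ℝ. -/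
open MeasureTheory

private lemma key_prop
    (μ : ℝ → ℝ) (hμnonpos : ∀ x : ℝ, μ x ≤ 0)
    (A : ℝ) (hApos : 0 < A)
    (u : ℝ → ℝ) (hu : ContDiff ℝ 2 u) (hub : ∀ x : ℝ, |u x| ≤ 1)
    (heq : ∀ x : ℝ,
      deriv (deriv u) x
        + u x * (A * ((1 - (u x) ^ 2) + ∫ y : ℝ, μ y * (1 - (u (x - y)) ^ 2))) = 0)
    (x₁ b : ℝ) (hx₁b : x₁ < b) (hx₁ : u x₁ = 1)
    (hpos : ∀ x ∈ Set.Icc x₁ b, 0 < u x) :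
    ∀ x ∈ Set.Icc x₁ b, u x = 1 := by
  have hsq : ∀ z : ℝ, 0 ≤ 1 - (u z) ^ 2 := by
    intro z
    have h := abs_le.1 (hub z)
    nlinarith [h.1, h.2]
  have hIle : ∀ x : ℝ, (∫ y : ℝ, μ y * (1 - (u (x - y)) ^ 2)) ≤ 0 := by
    intro x
    apply integral_nonpos
    intro y
    exact mul_nonpos_iff.2 (Or.inr ⟨hμnonpos y, hsq _⟩)
  -- regularity
  have hdu : Differentiable ℝ u := hu.differentiable (by norm_num)
  have hcu : Continuous u := hdu.continuous
  have hc1 : ContDiff ℝ 1 (deriv u) := by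
    have := hu.iterate_deriv' 1 1
    simpa using this
  have hddu : Differentiable ℝ (deriv u) := hc1.differentiable (by norm_num)
  have hcdu : Continuous (deriv u) := hddu.continuous
  -- w = 1 - u
  set w : ℝ → ℝ := fun x => 1 - u x with hwdef
  have hwnonneg : ∀ x, 0 ≤ w x := by
    intro x
    have := (abs_le.1 (hub x)).2
    simp only [hwdef]
    linarith
  have hwcont : Continuous w := continuous_const.sub hcu
  have hwd : ∀ x, HasDerivAt w (-deriv u x) x := fun x => (hdu x).hasDerivAt.const_sub 1
  -- deriv u x₁ = 0
  have hmax : IsLocalMax u x₁ :=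
    Filter.Eventually.of_forall (fun x => by rw [hx₁]; exact (abs_le.1 (hub x)).2)
  have hdu0 : deriv u x₁ = 0 := hmax.deriv_eq_zero
  -- -u'' ≤ K w on Icc
  set K : ℝ := 2 * A with hKdef
  have hKpos : 0 < K := by positivity
  have hwpp : ∀ x ∈ Set.Icc x₁ b, -(deriv (deriv u) x) ≤ K * w x := by
    intro x hx
    have h0 := heq x
    have h1 : 0 < u x := hpos x hx
    have h2 : u x ≤ 1 := (abs_le.1 (hub x)).2
    have h3 := hIle x
    have hw' : w x = 1 - u x := rfl
    rw [hw', hKdef]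
    have e1 : u x * (A * (∫ y : ℝ, μ y * (1 - (u (x - y)) ^ 2))) ≤ 0 := by
      nlinarith [mul_nonneg h1.le hApos.le]
    have e2 : u x * (A * (1 - u x ^ 2)) ≤ A * (1 - u x ^ 2) := by
      nlinarith [mul_nonneg (mul_nonneg hApos.le (hsq x)) (sub_nonneg.2 h2)]
    have e3 : A * (1 - u x ^ 2) ≤ 2 * A * (1 - u x) := by
      nlinarith [mul_nonneg hApos.le (mul_nonneg (sub_nonneg.2 h2) (sub_nonneg.2 h2))]
    nlinarith [e1, e2, e3]
  -- g, G
  set g : ℝ → ℝ := fun x => ∫ t in x₁..x, w t with hgdef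
  have hgderiv : ∀ x, HasDerivAt g (w x) x := fun x =>
    intervalIntegral.integral_hasDerivAt_right (hwcont.intervalIntegrable _ _)
      (hwcont.stronglyMeasurableAtFilter _ _) hwcont.continuousAt
  have hgd : Differentiable ℝ g := fun x => (hgderiv x).differentiableAt
  have hgderiv' : deriv g = w := funext fun x => (hgderiv x).deriv
  have hgcont : Continuous g := hgd.continuous
  have hgx₁ : g x₁ = 0 := intervalIntegral.integral_same
  set G : ℝ → ℝ := fun x => ∫ t in x₁..x, g t with hGdef
  have hGderiv : ∀ x, HasDerivAt G (g x) x := fun x =>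
    intervalIntegral.integral_hasDerivAt_right (hgcont.intervalIntegrable _ _)
      (hgcont.stronglyMeasurableAtFilter _ _) hgcont.continuousAt
  have hGd : Differentiable ℝ G := fun x => (hGderiv x).differentiableAt
  have hGx₁ : G x₁ = 0 := intervalIntegral.integral_same
  have hIcc : Convex ℝ (Set.Icc x₁ b) := convex_Icc _ _
  have hmemx₁ : x₁ ∈ Set.Icc x₁ b := ⟨le_refl _, hx₁b.le⟩
  -- step 1 : -u' ≤ K g on Icc
  have hφanti : AntitoneOn (fun x => -deriv u x - K * g x) (Set.Icc x₁ b) := by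
    apply antitoneOn_of_deriv_nonpos hIcc
    · exact ((hcdu.neg).sub (continuous_const.mul hgcont)).continuousOn
    · exact ((hddu.neg).sub (hgd.const_mul K)).differentiableOn
    · intro x hx
      rw [interior_Icc] at hx
      have hder : HasDerivAt (fun x => -deriv u x - K * g x)
          (-(deriv (deriv u) x) - K * w x) x :=
        ((hddu x).hasDerivAt.neg).sub ((hgderiv x).const_mul K)
      rw [hder.deriv]
      have := hwpp x (Set.mem_Icc_of_Ioo hx)
      linarith
  have hφle : ∀ x ∈ Set.Icc x₁ b, -deriv u x ≤ K * g x := by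
    intro x hx
    have h := hφanti hmemx₁ hx hx.1
    simp only [hdu0, hgx₁, neg_zero, mul_zero, sub_zero, zero_sub] at h
    linarith
  -- step 2 : w ≤ K G on Icc
  have hhanti : AntitoneOn (fun x => w x - K * G x) (Set.Icc x₁ b) := by
    apply antitoneOn_of_deriv_nonpos hIcc
    · exact (hwcont.sub (continuous_const.mul hGd.continuous)).continuousOn
    · exact ((hdu.const_sub 1).sub (hGd.const_mul K)).differentiableOn
    · intro x hx
      rw [interior_Icc] at hx
      have hder : HasDerivAt (fun x => w x - K * G x) (-deriv u x - K * g x) x :=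
        (hwd x).sub ((hGderiv x).const_mul K)
      rw [hder.deriv]
      have := hφle x (Set.mem_Icc_of_Ioo hx)
      linarith
  have hwleG : ∀ x ∈ Set.Icc x₁ b, w x ≤ K * G x := by
    intro x hx
    have h := hhanti hmemx₁ hx hx.1
    have hwx₁ : w x₁ = 0 := by simp [hwdef, hx₁]
    simp only [hwx₁, hGx₁, mul_zero, sub_zero, zero_sub] at h
    linarith
  -- g monotone and nonneg
  have hgmono : MonotoneOn g (Set.Icc x₁ b) := by
    apply monotoneOn_of_deriv_nonneg hIcc hgcont.continuousOn hgd.differentiableOn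
    intro x _
    rw [hgderiv']
    exact hwnonneg x
  have hgnn : ∀ x ∈ Set.Icc x₁ b, 0 ≤ g x := by
    intro x hx
    have := hgmono hmemx₁ hx hx.1
    rw [hgx₁] at this
    exact this
  -- G ≤ (x - x₁) g x
  have hGle : ∀ x ∈ Set.Icc x₁ b, G x ≤ (x - x₁) * g x := by
    intro x hx
    have h1 : (∫ t in x₁..x, g t) ≤ ∫ t in x₁..x, g x := by
      apply intervalIntegral.integral_mono_on hx.1
        (hgcont.intervalIntegrable _ _) intervalIntegrable_const
      intro t ht
      exact hgmono ⟨ht.1, ht.2.trans hx.2⟩ hx ht.2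
    calc G x ≤ ∫ t in x₁..x, g x := h1
      _ = (x - x₁) * g x := by simp [smul_eq_mul]
  set L : ℝ := K * (b - x₁) with hLdef
  have hwleg : ∀ x ∈ Set.Icc x₁ b, w x ≤ L * g x := by
    intro x hx
    have h1 := hwleG x hx
    have h2 := hGle x hx
    have h3 := hgnn x hx
    have h4 : x - x₁ ≤ b - x₁ := by linarith [hx.2]
    have h5 : K * G x ≤ K * ((x - x₁) * g x) := mul_le_mul_of_nonneg_left h2 hKpos.le
    have h6 : (x - x₁) * g x ≤ (b - x₁) * g x := mul_le_mul_of_nonneg_right h4 h3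
    have h7 : K * ((x - x₁) * g x) ≤ K * ((b - x₁) * g x) :=
      mul_le_mul_of_nonneg_left h6 hKpos.le
    have h8 : L * g x = K * ((b - x₁) * g x) := by rw [hLdef]; ring
    linarith
  -- exponential damping
  have hηanti : AntitoneOn (fun x => g x * Real.exp (-(L * x))) (Set.Icc x₁ b) := by
    apply antitoneOn_of_deriv_nonpos hIcc
    · exact (hgcont.mul
        (Real.continuous_exp.comp (continuous_const.mul continuous_id).neg)).continuousOn
    · exact (hgd.mul (((differentiable_id.const_mul L).neg).exp)).differentiableOn
    · intro x hx
      rw [interior_Icc] at hx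
      have he : HasDerivAt (fun x : ℝ => -(L * x)) (-L) x := by
        have h := ((hasDerivAt_id x).const_mul L).neg; simp only [mul_one] at h; exact h
      have hder : HasDerivAt (fun x => g x * Real.exp (-(L * x)))
          (w x * Real.exp (-(L * x)) + g x * (Real.exp (-(L * x)) * (-L))) x :=
        (hgderiv x).mul he.exp
      rw [hder.deriv]
      have h1 := hwleg x (Set.mem_Icc_of_Ioo hx)
      have h2 := Real.exp_pos (-(L * x))
      nlinarith
  have hg0 : ∀ x ∈ Set.Icc x₁ b, g x = 0 := by
    intro x hx
    have h1 := hηanti hmemx₁ hx hx.1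
    simp only [hgx₁, zero_mul] at h1
    have h2 := Real.exp_pos (-(L * x))
    have h3 := hgnn x hx
    nlinarith
  -- conclude
  intro x hx
  have hG0 : G x ≤ 0 := by
    have := hGle x hx
    rw [hg0 x hx] at this
    linarith
  have h1 := hwleG x hx
  have h2 := hwnonneg x
  have hw0 : w x = 0 := by nlinarith
  have : 1 - u x = 0 := hw0
  linarith

private lemma all_one
    (μ : ℝ → ℝ) (hμeven : ∀ x : ℝ, μ (-x) = μ x) (hμnonpos : ∀ x : ℝ, μ x ≤ 0)
    (A : ℝ) (hApos : 0 < A)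
    (u : ℝ → ℝ) (hu : ContDiff ℝ 2 u) (hub : ∀ x : ℝ, |u x| ≤ 1)
    (heq : ∀ x : ℝ,
      deriv (deriv u) x
        + u x * (A * ((1 - (u x) ^ 2) + ∫ y : ℝ, μ y * (1 - (u (x - y)) ^ 2))) = 0)
    (x₀ : ℝ) (hx₀ : u x₀ = 1) :
    ∀ x : ℝ, u x = 1 := by
  have hdu : Differentiable ℝ u := hu.differentiable (by norm_num)
  have hcu : Continuous u := hdu.continuous
  have hc1 : ContDiff ℝ 1 (deriv u) := by
    have := hu.iterate_deriv' 1 1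
    simpa using this
  have hddu : Differentiable ℝ (deriv u) := hc1.differentiable (by norm_num)
  have hopen : IsOpen {x : ℝ | u x = 1} := by
    rw [isOpen_iff_mem_nhds]
    intro x₁ hx₁
    have hx₁' : u x₁ = 1 := hx₁
    have hev : ∀ᶠ y in nhds x₁, 0 < u y :=
      (hcu.tendsto x₁).eventually (eventually_gt_nhds (by rw [hx₁']; norm_num))
    obtain ⟨δ, hδpos, hδ⟩ := Metric.eventually_nhds_iff.1 hev
    set r : ℝ := δ / 2 with hr
    have hrpos : 0 < r := by positivity
    have hposIcc : ∀ x ∈ Set.Icc (x₁ - r) (x₁ + r), 0 < u x := by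
      intro x hx
      apply hδ
      rw [Real.dist_eq, abs_sub_lt_iff]
      constructor <;> [skip; skip] <;>
        · have := hx.1; have := hx.2; simp only [hr] at *; linarith
    -- right side
    have hright : ∀ x ∈ Set.Icc x₁ (x₁ + r), u x = 1 := by
      apply key_prop μ hμnonpos A hApos u hu hub heq x₁ (x₁ + r) (by linarith) hx₁'
      intro x hx
      exact hposIcc x ⟨by linarith [hx.1], hx.2⟩
    -- left side via reflection
    set v : ℝ → ℝ := fun x => u (2 * x₁ - x) with hv
    have hvC : ContDiff ℝ 2 v := hu.comp (contDiff_const.sub contDiff_id)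
    have hvb : ∀ x, |v x| ≤ 1 := fun x => hub _
    have hdvx : ∀ x, HasDerivAt v (-(deriv u (2 * x₁ - x))) x := by
      intro x
      have h1 : HasDerivAt (fun x : ℝ => 2 * x₁ - x) (-1) x := (hasDerivAt_id x).const_sub (2 * x₁)
      have h2 := ((hdu (2 * x₁ - x)).hasDerivAt).comp x h1
      simp at h2; exact h2
    have hdv' : deriv v = fun x => -(deriv u (2 * x₁ - x)) := funext fun x => (hdvx x).deriv
    have hddv : ∀ x, deriv (deriv v) x = deriv (deriv u) (2 * x₁ - x) := by
      intro x
      rw [hdv']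
      have h1 : HasDerivAt (fun x : ℝ => 2 * x₁ - x) (-1) x := (hasDerivAt_id x).const_sub (2 * x₁)
      have h2 := (((hddu (2 * x₁ - x)).hasDerivAt).comp x h1).neg
      change HasDerivAt (fun x => -(deriv u (2 * x₁ - x))) _ x at h2
      rw [h2.deriv]
      ring
    have hintv : ∀ x : ℝ, (∫ y : ℝ, μ y * (1 - (v (x - y)) ^ 2))
        = ∫ y : ℝ, μ y * (1 - (u ((2 * x₁ - x) - y)) ^ 2) := by
      intro x
      calc (∫ y : ℝ, μ y * (1 - (v (x - y)) ^ 2))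
          = ∫ y : ℝ, (fun y => μ y * (1 - (u ((2 * x₁ - x) - y)) ^ 2)) (-y) := by
            congr 1
            funext y
            simp only [hv, hμeven y]
            norm_num
            left
            ring_nf
        _ = ∫ y : ℝ, μ y * (1 - (u ((2 * x₁ - x) - y)) ^ 2) :=
            integral_neg_eq_self (fun y => μ y * (1 - (u ((2 * x₁ - x) - y)) ^ 2)) volume
    have heqv : ∀ x : ℝ,
        deriv (deriv v) x
          + v x * (A * ((1 - (v x) ^ 2) + ∫ y : ℝ, μ y * (1 - (v (x - y)) ^ 2))) = 0 := by
      intro x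
      rw [hddv, hintv]
      exact heq (2 * x₁ - x)
    have hvx₁ : v x₁ = 1 := by
      simp only [hv]
      rw [show 2 * x₁ - x₁ = x₁ by ring, hx₁']
    have hleft : ∀ x ∈ Set.Icc x₁ (x₁ + r), v x = 1 := by
      apply key_prop μ hμnonpos A hApos v hvC hvb heqv x₁ (x₁ + r) (by linarith) hvx₁
      intro x hx
      exact hposIcc (2 * x₁ - x) ⟨by linarith [hx.2], by linarith [hx.1]⟩
    have : Set.Icc (x₁ - r) (x₁ + r) ⊆ {x : ℝ | u x = 1} := by
      intro x hx
      rcases le_total x₁ x with h | h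
      · exact hright x ⟨h, hx.2⟩
      · have := hleft (2 * x₁ - x) ⟨by linarith, by linarith [hx.1]⟩
        simpa only [hv, Set.mem_setOf_eq, show 2 * x₁ - (2 * x₁ - x) = x by ring] using this
    exact Filter.mem_of_superset (Icc_mem_nhds (by linarith) (by linarith)) this
  have hclosed : IsClosed {x : ℝ | u x = 1} := isClosed_eq hcu continuous_const
  have huniv : {x : ℝ | u x = 1} = Set.univ :=
    IsClopen.eq_univ ⟨hclosed, hopen⟩ ⟨x₀, hx₀⟩
  intro x
  have : x ∈ {x : ℝ | u x = 1} := by rw [huniv]; trivial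
  exact this


/-- Let `W = A·(δ₀ + μ)` with `μ ∈ L¹(ℝ)` even, `μ ≤ 0`, `‖μ‖₁ < 1` and
`A = 1/(1 − ‖μ‖₁)` (so `Ŵ(0) = 1`). If `u : ℝ → ℝ` is a bounded `C²` solution of
`u″ + u·(W ∗ (1 − u²)) = 0` with `|u| ≤ 1` and `u(x) → ±1` as `x → ±∞`, then
`−1 < u < 1` on `ℝ`. -/
theorem strict_bounds_black_soliton
    (μ : ℝ → ℝ) (hμint : Integrable μ) (hμeven : ∀ x : ℝ, μ (-x) = μ x)
    (hμnonpos : ∀ x : ℝ, μ x ≤ 0)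
    (hμnorm : (∫ x : ℝ, |μ x|) < 1)
    (A : ℝ) (hA : A = 1 / (1 - ∫ x : ℝ, |μ x|))
    (u : ℝ → ℝ) (hu : ContDiff ℝ 2 u) (hub : ∀ x : ℝ, |u x| ≤ 1)
    (heq : ∀ x : ℝ,
      deriv (deriv u) x
        + u x * (A * ((1 - (u x) ^ 2) + ∫ y : ℝ, μ y * (1 - (u (x - y)) ^ 2))) = 0)
    (hlimTop : Filter.Tendsto u Filter.atTop (nhds 1))
    (hlimBot : Filter.Tendsto u Filter.atBot (nhds (-1))) :
    ∀ x : ℝ, -1 < u x ∧ u x < 1 := by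
  have hApos : 0 < A := by
    rw [hA]
    have : (0:ℝ) < 1 - ∫ x : ℝ, |μ x| := by linarith
    positivity
  intro x
  constructor
  · by_contra h
    push_neg at h
    have hx : u x = -1 := le_antisymm h (abs_le.1 (hub x)).1
    -- apply all_one to -u
    set n : ℝ → ℝ := fun y => -u y with hn
    have hnC : ContDiff ℝ 2 n := hu.neg
    have hnb : ∀ y, |n y| ≤ 1 := fun y => by simpa [hn, abs_neg] using hub y
    have hdn : deriv n = fun y => -deriv u y := by
      funext y; simp [hn, deriv.neg]
    have hddn : ∀ y, deriv (deriv n) y = -(deriv (deriv u) y) := by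
      intro y; rw [hdn]; simp [deriv.neg]
    have heqn : ∀ y : ℝ,
        deriv (deriv n) y
          + n y * (A * ((1 - (n y) ^ 2) + ∫ z : ℝ, μ z * (1 - (n (y - z)) ^ 2))) = 0 := by
      intro y
      have h0 := heq y
      have hsq : ∀ z : ℝ, (n z) ^ 2 = (u z) ^ 2 := fun z => by simp [hn]
      have hI : (∫ z : ℝ, μ z * (1 - (n (y - z)) ^ 2))
          = ∫ z : ℝ, μ z * (1 - (u (y - z)) ^ 2) := by
        congr 1; funext z; rw [hsq]
      rw [hddn, hI, hsq]
      have : n y = -u y := rfl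
      rw [this]
      ring_nf
      ring_nf at h0
      linarith
    have hall := all_one μ hμeven hμnonpos A hApos n hnC hnb heqn x (by simp [hn, hx])
    have hu' : u = fun _ => -1 := funext fun y => by have := hall y; simp [hn] at this; linarith
    rw [hu'] at hlimTop
    have := tendsto_nhds_unique hlimTop tendsto_const_nhds
    norm_num at this
  · by_contra h
    push_neg at h
    have hx : u x = 1 := le_antisymm (abs_le.1 (hub x)).2 h
    have hall := all_one μ hμeven hμnonpos A hApos u hu hub heq x hx
    have hu' : u = fun _ => 1 := funext hall
    rw [hu'] at hlimBot
    have := tendsto_nhds_unique hlimBot tendsto_const_nhds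
    norm_num at this
end

section
/- Let c ≥ 0, and let τ, σ > 0 with τ < π/√(8 + 2c²). Suppose v : ℝ → ℝ is C², nonnegative, attains its maximum M at 0, satisfies −v″ ≤ (2 + c²/2)·v on ℝ, and there exist points y₋ ∈ (−τ, 0) and y₊ ∈ (0, τ) with v(y₋) ≤ K and v(y₊) ≤ K, where K = (1 + c²/4)/(τσ). Then M ≤ K·sec(τ·√(2 + c²/2)). -/
/-- Comparison estimate: if `v ≥ 0` is `C²`, attains its maximum `M` at `0`,
satisfies `−v″ ≤ (2 + c²/2)·v` on `ℝ`, and `v(ym), v(yp) ≤ K = (1 + c²/4)/(τσ)`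
for some `ym ∈ (−τ, 0)`, `yp ∈ (0, τ)` with `τ < π/√(8 + 2c²)`, then
`M ≤ K·sec(τ·√(2 + c²/2))`. -/
theorem supersolution_comparison_bound (c τ σ : ℝ)
    (hc : 0 ≤ c) (hτ : 0 < τ) (hσ : 0 < σ)
    (hτπ : τ < Real.pi / Real.sqrt (8 + 2 * c ^ 2))
    (v : ℝ → ℝ) (hv : ContDiff ℝ 2 v) (hvpos : ∀ x, 0 ≤ v x)
    (M : ℝ) (hM : ∀ x, v x ≤ M) (hM0 : v 0 = M)
    (hineq : ∀ x : ℝ, -(deriv (deriv v) x) ≤ (2 + c ^ 2 / 2) * v x)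
    (K : ℝ) (hK : K = (1 + c ^ 2 / 4) / (τ * σ))
    (ym yp : ℝ) (hy₁ : ym ∈ Set.Ioo (-τ) 0) (hy₂ : yp ∈ Set.Ioo 0 τ)
    (hv₁ : v ym ≤ K) (hv₂ : v yp ≤ K) :
    M ≤ K * (1 / Real.cos (τ * Real.sqrt (2 + c ^ 2 / 2))) := by
  obtain ⟨hym1, hym2⟩ := hy₁
  obtain ⟨hyp1, hyp2⟩ := hy₂
  set l2 : ℝ := 2 + c ^ 2 / 2 with hl2def
  have hl2 : (0:ℝ) < l2 := by positivity
  set lam : ℝ := Real.sqrt l2 with hlamdef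
  have hlam : 0 < lam := Real.sqrt_pos.mpr hl2
  have hlamsq : lam ^ 2 = l2 := Real.sq_sqrt hl2.le
  have hsq : Real.sqrt (8 + 2 * c ^ 2) = 2 * lam := by
    rw [show (8 : ℝ) + 2 * c ^ 2 = 2 ^ 2 * l2 by rw [hl2def]; ring,
      Real.sqrt_mul (by positivity), Real.sqrt_sq (by norm_num)]
  have hτlam : lam * τ < Real.pi / 2 := by
    rw [hsq] at hτπ
    have h2 := (lt_div_iff₀ (by positivity)).mp hτπ
    linarith
  -- positivity of cos on the relevant range
  have hcospos : ∀ x : ℝ, -τ ≤ x → x ≤ τ → 0 < Real.cos (lam * x) := by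
    intro x hx1 hx2
    apply Real.cos_pos_of_mem_Ioo
    have h1 : lam * x ≤ lam * τ := mul_le_mul_of_nonneg_left hx2 hlam.le
    have h2 : lam * (-τ) ≤ lam * x := mul_le_mul_of_nonneg_left hx1 hlam.le
    rw [mul_neg] at h2
    constructor <;> [linarith; linarith]
  have hcosτ : 0 < Real.cos (τ * lam) := by
    have := hcospos τ (by linarith) le_rfl
    rwa [mul_comm] at this
  have hKpos : 0 < K := by rw [hK]; positivity
  set K' : ℝ := K / Real.cos (τ * lam) with hK'def
  have hK'pos : 0 < K' := div_pos hKpos hcosτ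
  -- derivative facts for v
  have hv1 : Differentiable ℝ v := hv.differentiable (by norm_num)
  have hvd : ContDiff ℝ 1 (deriv v) := by
    have h2 : ContDiff ℝ ((1 : ℕ) + 1) v := by exact_mod_cast hv
    exact (contDiff_succ_iff_deriv.mp h2).2.2
  have hv2 : Differentiable ℝ (deriv v) := hvd.differentiable (by norm_num)
  -- derivative facts for trig functions
  have hcos : ∀ x : ℝ, HasDerivAt (fun y => Real.cos (lam * y))
      (-(lam * Real.sin (lam * x))) x := by
    intro x
    have := (Real.hasDerivAt_cos (lam * x)).comp x ((hasDerivAt_id x).const_mul lam)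
    refine this.congr_deriv ?_
    simp [mul_comm]
  have hsin : ∀ x : ℝ, HasDerivAt (fun y => Real.sin (lam * y))
      (lam * Real.cos (lam * x)) x := by
    intro x
    have := (Real.hasDerivAt_sin (lam * x)).comp x ((hasDerivAt_id x).const_mul lam)
    refine this.congr_deriv ?_
    simp [mul_comm]
  -- the comparison function and its Wronskian
  set ψ : ℝ → ℝ := fun x => Real.cos (lam * x) with hψdef
  set h : ℝ → ℝ := fun x => K' * ψ x - v x with hhdef
  set h' : ℝ → ℝ := fun x => -(K' * lam * Real.sin (lam * x)) - deriv v x with hh'def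
  have hh : ∀ x : ℝ, HasDerivAt h (h' x) x := by
    intro x
    have := ((hcos x).const_mul K').sub (hv1 x).hasDerivAt
    refine this.congr_deriv ?_
    simp only [hh'def]; ring
  have hh' : ∀ x : ℝ, HasDerivAt h' (-(K' * (l2 * ψ x)) - deriv (deriv v) x) x := by
    intro x
    have := (((hsin x).const_mul (K' * lam)).neg).sub (hv2 x).hasDerivAt
    refine this.congr_deriv ?_
    simp only [hψdef, ← hlamsq]; ring
  set W : ℝ → ℝ := fun x => h' x * ψ x + lam * h x * Real.sin (lam * x) with hWdef
  have hW : ∀ x : ℝ, HasDerivAt W ((-(deriv (deriv v) x) - l2 * v x) * ψ x) x := by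
    intro x
    have := ((hh' x).mul (hcos x)).add (((hh x).const_mul lam).mul (hsin x))
    refine this.congr_deriv ?_
    simp only [hψdef, hhdef, ← hlamsq]; ring
  have hWcont : Continuous W := by
    have : Differentiable ℝ W := fun x => (hW x).differentiableAt
    exact this.continuous
  -- W is antitone on [ym, yp]
  have hWanti : AntitoneOn W (Set.Icc ym yp) := by
    apply antitoneOn_of_deriv_nonpos (convex_Icc ym yp) hWcont.continuousOn
      (fun x _ => (hW x).differentiableAt.differentiableWithinAt)
    intro x hx
    rw [interior_Icc] at hx
    rw [(hW x).deriv]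
    have hψx : 0 < ψ x := hcospos x (by linarith [hx.1]) (by linarith [hx.2])
    have h1 : -(deriv (deriv v) x) - l2 * v x ≤ 0 := by linarith [hineq x]
    exact mul_nonpos_of_nonpos_of_nonneg h1 hψx.le
  -- the ratio r = h/ψ
  set r : ℝ → ℝ := fun x => h x / ψ x with hrdef
  have hr : ∀ x : ℝ, -τ ≤ x → x ≤ τ → HasDerivAt r (W x / ψ x ^ 2) x := by
    intro x hx1 hx2
    have hψx : 0 < ψ x := hcospos x hx1 hx2
    have := (hh x).div (hcos x) (ne_of_gt hψx)
    refine this.congr_deriv ?_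
    simp only [hWdef]; ring
  have hr0 : r 0 = K' - M := by
    simp only [hrdef, hhdef, hψdef, mul_zero, Real.cos_zero, mul_one, div_one, hM0]
  -- endpoint bounds: h ≥ 0 at ym and yp
  have hKK' : K = K' * Real.cos (lam * τ) := by
    rw [hK'def, mul_comm τ lam]
    field_simp
    rw [div_self (by rw [mul_comm]; exact ne_of_gt hcosτ)]
  have hhyp : 0 ≤ h yp := by
    simp only [hhdef, hψdef]
    have hcc : Real.cos (lam * τ) ≤ Real.cos (lam * yp) := by
      apply Real.cos_le_cos_of_nonneg_of_le_pi
      · exact mul_nonneg hlam.le hyp1.le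
      · linarith [Real.pi_pos, hτlam]
      · exact mul_le_mul_of_nonneg_left hyp2.le hlam.le
    have := mul_le_mul_of_nonneg_left hcc hK'pos.le
    linarith [hv₂, hKK']
  have hhym : 0 ≤ h ym := by
    simp only [hhdef, hψdef]
    have hev : Real.cos (lam * ym) = Real.cos (lam * -ym) := by
      rw [show lam * -ym = -(lam * ym) by ring, Real.cos_neg]
    have hcc : Real.cos (lam * τ) ≤ Real.cos (lam * -ym) := by
      apply Real.cos_le_cos_of_nonneg_of_le_pi
      · exact mul_nonneg hlam.le (by linarith)
      · linarith [Real.pi_pos, hτlam]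
      · exact mul_le_mul_of_nonneg_left (by linarith) hlam.le
    have := mul_le_mul_of_nonneg_left hcc hK'pos.le
    rw [← hev] at this
    linarith [hv₁, hKK']
  -- main step: r 0 ≥ 0
  have hmain : 0 ≤ r 0 := by
    rcases le_or_gt (W 0) 0 with hW0 | hW0
    · -- r is antitone on [0, yp]
      have hranti : AntitoneOn r (Set.Icc 0 yp) := by
        apply antitoneOn_of_deriv_nonpos (convex_Icc 0 yp)
        · intro x hx
          exact (hr x (by linarith [hx.1]) (by linarith [hx.2])).differentiableAt.continuousAt.continuousWithinAt
        · intro x hx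
          rw [interior_Icc] at hx
          exact (hr x (by linarith [hx.1]) (by linarith [hx.2])).differentiableAt.differentiableWithinAt
        · intro x hx
          rw [interior_Icc] at hx
          rw [(hr x (by linarith [hx.1]) (by linarith [hx.2])).deriv]
          have hWx : W x ≤ W 0 :=
            hWanti ⟨by linarith, by linarith⟩ ⟨by linarith [hx.1], hx.2.le⟩ hx.1.le
          have hWx0 : W x ≤ 0 := le_trans hWx hW0
          have hψx : 0 < ψ x := hcospos x (by linarith [hx.1]) (by linarith [hx.2])
          exact div_nonpos_of_nonpos_of_nonneg hWx0 (by positivity)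
      have h1 : r yp ≤ r 0 :=
        hranti ⟨le_rfl, hyp1.le⟩ ⟨hyp1.le, le_rfl⟩ hyp1.le
      have h2 : 0 ≤ r yp := by
        rw [hrdef]
        exact div_nonneg hhyp (hcospos yp (by linarith) (by linarith)).le
      linarith
    · -- r is monotone on [ym, 0]
      have hrmono : MonotoneOn r (Set.Icc ym 0) := by
        apply monotoneOn_of_deriv_nonneg (convex_Icc ym 0)
        · intro x hx
          exact (hr x (by linarith [hx.1]) (by linarith [hx.2])).differentiableAt.continuousAt.continuousWithinAt
        · intro x hx
          rw [interior_Icc] at hx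
          exact (hr x (by linarith [hx.1]) (by linarith [hx.2])).differentiableAt.differentiableWithinAt
        · intro x hx
          rw [interior_Icc] at hx
          rw [(hr x (by linarith [hx.1]) (by linarith [hx.2])).deriv]
          have hWx : W 0 ≤ W x :=
            hWanti ⟨hx.1.le, by linarith [hx.2]⟩ ⟨by linarith, by linarith⟩ hx.2.le
          have hWx0 : 0 ≤ W x := le_trans hW0.le hWx
          have hψx : 0 < ψ x := hcospos x (by linarith [hx.1]) (by linarith [hx.2])
          positivity
      have h1 : r ym ≤ r 0 :=
        hrmono ⟨le_rfl, hym2.le⟩ ⟨hym2.le, le_rfl⟩ hym2.le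
      have h2 : 0 ≤ r ym := by
        rw [hrdef]
        exact div_nonneg hhym (hcospos ym (by linarith) (by linarith)).le
      linarith
  rw [hr0] at hmain
  have hMK' : M ≤ K' := by linarith
  rw [hK'def] at hMK'
  calc M ≤ K / Real.cos (τ * lam) := hMK'
    _ = K * (1 / Real.cos (τ * lam)) := by ring
end
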